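/- Let G be a connected graph on {1,...,n} that is BFS-enumerated. In the BFS tree (where the parent of each vertex j ≥ 2 is its minimal-index neighbor), define the subtree weight w(v) as the number of descendants of v including v itself. Then there exists a graph G' isomorphic to G that is BFS-enumerated and such that for every vertex v, the subtree weights of the children of v, listed in increasing order of labels, form a non-increasing sequence. -/

import Mathlib

open Classical in
/-- Minimal-label neighbor (BFS parent) of `j`; `j` itself otherwise. -/
noncomputable def parent {n : ℕ} (G : SimpleGraph (Fin n)) (j : Fin n) : Fin n :=
  if h : 0 < j.val ∧ {m : ℕ | ∃ i : Fin n, i.val = m ∧ G.Adj i j}.Nonempty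
  then ⟨sInf {m : ℕ | ∃ i : Fin n, i.val = m ∧ G.Adj i j}, by
    obtain ⟨i, hi, -⟩ := Nat.sInf_mem h.2
    exact hi ▸ i.isLt⟩
  else j

/-- The identity labeling of `G` is a valid BFS order starting at vertex `0`. -/
def IsBFSEnum {n : ℕ} (G : SimpleGraph (Fin n)) : Prop :=
  (∀ j : Fin n, 0 < j.val → parent G j < j) ∧
  (∀ i j : Fin n, 0 < i.val → i ≤ j → parent G i ≤ parent G j)

/-- `u` is a descendant of `v` (including `v` itself) in the BFS tree. -/
def Descend {n : ℕ} (G : SimpleGraph (Fin n)) (v u : Fin n) : Prop :=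
  ∃ k : ℕ, (parent G)^[k] u = v

/-- Subtree weight: number of BFS-tree descendants of `v`, including `v`. -/
noncomputable def weight {n : ℕ} (G : SimpleGraph (Fin n)) (v : Fin n) : ℕ :=
  Nat.card {u : Fin n // Descend G v u}

/-- `c` is a child of `v` in the BFS tree. -/
def ChildOf {n : ℕ} (G : SimpleGraph (Fin n)) (c v : Fin n) : Prop :=
  parent G c = v ∧ c ≠ v

/-- BFS-tree depth of `v`: least number of parent steps reaching vertex `0`. -/
noncomputable def depth {n : ℕ} (G : SimpleGraph (Fin n)) (v : Fin n) : ℕ :=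
  sInf {k : ℕ | ((parent G)^[k] v).val = 0}

section Generic
variable {n : ℕ}

lemma parent_val_zero (K : SimpleGraph (Fin n)) {x : Fin n} (hx : x.val = 0) :
    parent K x = x := by
  unfold parent; rw [dif_neg]; simp [hx]

lemma parent_spec (K : SimpleGraph (Fin n)) {x : Fin n} (hx : 0 < x.val)
    {q0 : Fin n} (hq0 : K.Adj q0 x) :
    K.Adj (parent K x) x ∧ ∀ q, K.Adj q x → parent K x ≤ q := by
  have hne : {m : ℕ | ∃ i : Fin n, i.val = m ∧ K.Adj i x}.Nonempty := ⟨q0.val, q0, rfl, hq0⟩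
  unfold parent
  rw [dif_pos ⟨hx, hne⟩]
  obtain ⟨i, hi, hadj⟩ := Nat.sInf_mem hne
  constructor
  · convert hadj using 2
    exact hi.symm
  · intro q hq
    have : sInf {m : ℕ | ∃ i : Fin n, i.val = m ∧ K.Adj i x} ≤ q.val :=
      Nat.sInf_le ⟨q, rfl, hq⟩
    exact this

lemma parent_eq (K : SimpleGraph (Fin n)) {x p : Fin n} (hx : 0 < x.val)
    (hadj : K.Adj p x) (hmin : ∀ q, K.Adj q x → p ≤ q) : parent K x = p :=
  le_antisymm ((parent_spec K hx hadj).2 p hadj) (hmin _ (parent_spec K hx hadj).1)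

-- descend generic
lemma descend_refl (K : SimpleGraph (Fin n)) (x : Fin n) : Descend K x x := ⟨0, rfl⟩

lemma descend_extend (K : SimpleGraph (Fin n)) {r u : Fin n}
    (h : Descend K r (parent K u)) : Descend K r u := by
  obtain ⟨k, hk⟩ := h
  exact ⟨k + 1, by rw [Function.iterate_succ_apply]; exact hk⟩

lemma descend_trans (K : SimpleGraph (Fin n)) {a b c : Fin n}
    (h1 : Descend K a b) (h2 : Descend K b c) : Descend K a c := by
  obtain ⟨k, hk⟩ := h1; obtain ⟨m, hm⟩ := h2
  exact ⟨k + m, by rw [Function.iterate_add_apply, hm, hk]⟩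

end Generic

section BFS
variable {n : ℕ} {G : SimpleGraph (Fin n)}

lemma bfs_spec (hB : IsBFSEnum G) {x : Fin n} (hx : 0 < x.val) :
    G.Adj (parent G x) x ∧ ∀ q, G.Adj q x → parent G x ≤ q := by
  have hlt := hB.1 x hx
  have hc : {m : ℕ | ∃ i : Fin n, i.val = m ∧ G.Adj i x}.Nonempty := by
    by_contra hemp
    have : parent G x = x := by unfold parent; rw [dif_neg]; tauto
    rw [this] at hlt; exact lt_irrefl _ hlt
  obtain ⟨m, i, him, hadj⟩ := hc
  exact parent_spec G hx hadj

lemma parent_le_self (hB : IsBFSEnum G) (x : Fin n) : parent G x ≤ x := by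
  rcases Nat.eq_zero_or_pos x.val with h | h
  · rw [parent_val_zero G h]
  · exact le_of_lt (hB.1 x h)

lemma exists_root (hB : IsBFSEnum G) (x : Fin n) :
    ∃ k, ((parent G)^[k] x).val = 0 := by
  have : ∀ m : ℕ, ∀ x : Fin n, x.val = m → ∃ k, ((parent G)^[k] x).val = 0 := by
    intro m
    induction m using Nat.strong_induction_on with
    | _ m ih =>
      intro x hxm
      rcases Nat.eq_zero_or_pos x.val with h | h
      · exact ⟨0, h⟩
      · obtain ⟨k, hk⟩ := ih (parent G x).val (by subst hxm; exact hB.1 x h) _ rfl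
        exact ⟨k + 1, by rw [Function.iterate_succ_apply]; exact hk⟩
  exact this x.val x rfl

lemma depth_spec (hB : IsBFSEnum G) (x : Fin n) :
    ((parent G)^[depth G x] x).val = 0 :=
  Nat.sInf_mem (exists_root hB x)

lemma depth_val_zero {x : Fin n} (hx : x.val = 0) : depth G x = 0 := by
  unfold depth
  exact Nat.sInf_eq_zero.mpr (Or.inl hx)

lemma depth_pos (hB : IsBFSEnum G) {x : Fin n} (hx : 0 < x.val) : 0 < depth G x := by
  rcases Nat.eq_zero_or_pos (depth G x) with h | h
  · have := depth_spec hB x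
    rw [h] at this
    simp only [Function.iterate_zero, id_eq] at this
    omega
  · exact h

lemma depth_parent_succ (hB : IsBFSEnum G) {x : Fin n} (hx : 0 < x.val) :
    depth G x = depth G (parent G x) + 1 := by
  have h1 : depth G x ≤ depth G (parent G x) + 1 := by
    apply Nat.sInf_le
    show ((parent G)^[depth G (parent G x) + 1] x).val = 0
    rw [Function.iterate_succ_apply]
    exact depth_spec hB (parent G x)
  have h2 : depth G (parent G x) + 1 ≤ depth G x := by
    obtain ⟨m, hm⟩ := Nat.exists_eq_succ_of_ne_zero (depth_pos hB hx).ne'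
    have := depth_spec hB x
    rw [hm, Function.iterate_succ_apply] at this
    have : depth G (parent G x) ≤ m := Nat.sInf_le this
    omega
  omega

lemma depth_mono (hB : IsBFSEnum G) : ∀ {x y : Fin n}, x ≤ y → depth G x ≤ depth G y := by
  suffices h : ∀ m : ℕ, ∀ y x : Fin n, y.val = m → x ≤ y → depth G x ≤ depth G y by
    intro x y hxy; exact h y.val y x rfl hxy
  intro m
  induction m using Nat.strong_induction_on with
  | _ m ih =>
    intro y x hym hxy
    rcases eq_or_lt_of_le hxy with rfl | hlt
    · exact le_refl _
    rcases Nat.eq_zero_or_pos x.val with h0 | h0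
    · rw [depth_val_zero h0]; omega
    have hy0 : 0 < y.val := lt_of_le_of_lt (Nat.zero_le _) (by exact hlt)
    have hp : parent G x ≤ parent G y := hB.2 x y h0 hxy
    have hpy : (parent G y).val < m := by rw [← hym]; exact hB.1 y hy0
    have := ih (parent G y).val hpy (parent G y) (parent G x) rfl hp
    rw [depth_parent_succ hB h0, depth_parent_succ hB hy0]
    omega

lemma lt_of_depth_lt (hB : IsBFSEnum G) {x y : Fin n} (h : depth G x < depth G y) : x < y := by
  by_contra hc
  exact absurd (depth_mono hB (not_lt.mp hc)) (by omega)

lemma depth_le_of_adj (hB : IsBFSEnum G) {u x : Fin n} (h : G.Adj u x) :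
    depth G x ≤ depth G u + 1 := by
  rcases Nat.eq_zero_or_pos x.val with h0 | h0
  · rw [depth_val_zero h0]; omega
  · have hp : parent G x ≤ u := (bfs_spec hB h0).2 u h
    rw [depth_parent_succ hB h0]
    exact Nat.add_le_add_right (depth_mono hB hp) 1

lemma descend_le (hB : IsBFSEnum G) {r u : Fin n} (h : Descend G r u) : r ≤ u := by
  obtain ⟨k, hk⟩ := h
  induction k generalizing u with
  | zero => exact le_of_eq hk.symm
  | succ k ih =>
    rw [Function.iterate_succ_apply] at hk
    exact le_trans (ih hk) (parent_le_self hB u)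

lemma descend_depth_le (hB : IsBFSEnum G) {r u : Fin n} (h : Descend G r u) :
    depth G r ≤ depth G u := by
  obtain ⟨k, hk⟩ := h
  induction k generalizing u with
  | zero => simp only [Function.iterate_zero, id_eq] at hk; exact le_of_eq (by rw [hk])
  | succ k ih =>
    rw [Function.iterate_succ_apply] at hk
    refine le_trans (ih hk) ?_
    rcases Nat.eq_zero_or_pos u.val with h0 | h0
    · rw [parent_val_zero G h0]
    · rw [depth_parent_succ hB h0]; omega

lemma descend_parent (hB : IsBFSEnum G) {r u : Fin n} (h : Descend G r u) (hne : u ≠ r) :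
    Descend G r (parent G u) ∧ 0 < u.val := by
  obtain ⟨k, hk⟩ := h
  rcases k with _ | m
  · simp only [Function.iterate_zero, id_eq] at hk; exact absurd hk hne
  constructor
  · rw [Function.iterate_succ_apply] at hk; exact ⟨m, hk⟩
  · rcases Nat.eq_zero_or_pos u.val with h0 | h0
    · exfalso
      have hfix : parent G u = u := parent_val_zero G h0
      have h2 : (parent G)^[m + 1] u = u := Function.iterate_fixed hfix (m + 1)
      rw [hk] at h2
      exact hne h2.symm
    · exact h0
  
lemma descend_eq_of_depth_le (hB : IsBFSEnum G) {r u : Fin n} (h : Descend G r u)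
    (hd : depth G u ≤ depth G r) : u = r := by
  by_contra hne
  obtain ⟨hp, h0⟩ := descend_parent hB h hne
  have h1 : depth G r ≤ depth G (parent G u) := descend_depth_le hB hp
  have h2 : depth G u = depth G (parent G u) + 1 := depth_parent_succ hB h0
  omega

lemma descend_convex (hB : IsBFSEnum G) :
    ∀ m : ℕ, ∀ r a z b : Fin n, depth G z = m → Descend G r a → Descend G r b →
      a ≤ z → z ≤ b → depth G a = m → depth G b = m → Descend G r z := by
  intro m
  induction m using Nat.strong_induction_on with
  | _ m ih =>
    intro r a z b hzm ha hb haz hzb ham hbm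
    rcases le_or_gt m (depth G r) with hle | hgt
    · have ha' : a = r := descend_eq_of_depth_le hB ha (by omega)
      have hb' : b = r := descend_eq_of_depth_le hB hb (by omega)
      have : z = r := le_antisymm (hb' ▸ hzb) (ha' ▸ haz)
      rw [this]; exact descend_refl G r
    · have hane : a ≠ r := fun h => by rw [h] at ham; omega
      have hbne : b ≠ r := fun h => by rw [h] at hbm; omega
      obtain ⟨hpa, ha0⟩ := descend_parent hB ha hane
      obtain ⟨hpb, hb0⟩ := descend_parent hB hb hbne
      have hz0 : 0 < z.val := by
        rcases Nat.eq_zero_or_pos z.val with h0 | h0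
        · rw [depth_val_zero h0] at hzm; omega
        · exact h0
      have hpaz : parent G a ≤ parent G z := hB.2 a z ha0 haz
      have hpzb : parent G z ≤ parent G b := hB.2 z b hz0 hzb
      have e1 : depth G (parent G a) = m - 1 := by
        have := depth_parent_succ hB ha0; omega
      have e2 : depth G (parent G z) = m - 1 := by
        have := depth_parent_succ hB hz0; omega
      have e3 : depth G (parent G b) = m - 1 := by
        have := depth_parent_succ hB hb0; omega
      have := ih (m - 1) (by omega) r (parent G a) (parent G z) (parent G b) e2 hpa hpb hpaz hpzb e1 e3
      exact descend_extend G this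

end BFS

section Two
variable {n : ℕ} {G : SimpleGraph (Fin n)} {v c d : Fin n}

def BS (G : SimpleGraph (Fin n)) (c d : Fin n) : Set (Fin n) :=
  {u | Descend G c u ∨ Descend G d u}

variable (hB : IsBFSEnum G) (hcv : parent G c = v) (hcne : c ≠ v)
  (hdv : parent G d = v) (hdne : d ≠ v) (hd1 : d.val = c.val + 1)

include hB hcv hcne in
lemma c_pos : 0 < c.val := by
  rcases Nat.eq_zero_or_pos c.val with h0 | h0
  · exfalso; apply hcne; rw [← hcv, parent_val_zero G h0]
  · exact h0

include hB hcv hcne in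
lemma v_lt_c : v < c := hcv ▸ hB.1 c (c_pos hB hcv hcne)

include hB hcv hcne in
lemma depth_c_eq : depth G c = depth G v + 1 := by
  have := depth_parent_succ hB (c_pos hB hcv hcne); rw [hcv] at this; exact this

include hB hcv hcne hdv hdne in
lemma depth_d_eq_c : depth G d = depth G c := by
  have h1 := depth_c_eq hB hcv hcne
  have h2 := depth_c_eq hB hdv hdne
  omega

include hB hcv hcne hdv hdne hd1 in
lemma sep_cd : ∀ m : ℕ, ∀ a b : Fin n, depth G a = m → Descend G c a → Descend G d b →
    depth G b = m → a < b := by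
  have hdc := depth_d_eq_c hB hcv hcne hdv hdne
  intro m
  induction m using Nat.strong_induction_on with
  | _ m ih =>
    intro a b ham ha hb hbm
    rcases le_or_gt m (depth G c) with hle | hgt
    · have ha' : a = c := descend_eq_of_depth_le hB ha (by omega)
      have hb' : b = d := descend_eq_of_depth_le hB hb (by omega)
      rw [ha', hb', Fin.lt_def]; omega
    · have hane : a ≠ c := fun h => by rw [h] at ham; omega
      have hbne : b ≠ d := fun h => by rw [h] at hbm; omega
      obtain ⟨hpa, ha0⟩ := descend_parent hB ha hane
      obtain ⟨hpb, hb0⟩ := descend_parent hB hb hbne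
      have e1 : depth G (parent G a) = m - 1 := by
        have := depth_parent_succ hB ha0; omega
      have e3 : depth G (parent G b) = m - 1 := by
        have := depth_parent_succ hB hb0; omega
      have hlt : parent G a < parent G b := ih (m - 1) (by omega) _ _ e1 hpa hpb e3
      by_contra hc
      exact absurd (hB.2 b a hb0 (not_lt.mp hc)) (not_le.mpr hlt)

include hB hcv hcne hdv hdne hd1 in
lemma disj_cd : ∀ u : Fin n, Descend G c u → Descend G d u → False := fun u h1 h2 =>
  lt_irrefl u (sep_cd hB hcv hcne hdv hdne hd1 (depth G u) u u rfl h1 h2 rfl)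

include hB hcv hcne hdv hdne hd1 in
lemma nocross : ∀ u z : Fin n, Descend G d u → Descend G c z →
    depth G z + 1 = depth G u → ¬ G.Adj z u := by
  intro u z hu hz hdep hadj
  have hdc := depth_d_eq_c hB hcv hcne hdv hdne
  have hu0 : 0 < u.val := by
    rcases Nat.eq_zero_or_pos u.val with h0 | h0
    · rw [depth_val_zero h0] at hdep; omega
    · exact h0
  have hmin : parent G u ≤ z := (bfs_spec hB hu0).2 z hadj
  rcases eq_or_ne u d with rfl | hne
  · have hzc : depth G z ≤ depth G c := by omega
    have : z = c := descend_eq_of_depth_le hB hz (by omega)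
    subst this
    have := depth_c_eq hB hcv hcne
    omega
  · obtain ⟨hpu, -⟩ := descend_parent hB hu hne
    have e1 : depth G (parent G u) = depth G z := by
      have := depth_parent_succ hB hu0; omega
    have := sep_cd hB hcv hcne hdv hdne hd1 (depth G z) z (parent G u) rfl hz hpu e1
    exact absurd hmin (not_le.mpr this)

include hB hcv hcne hdv hdne hd1 in
lemma convexB_aux : ∀ m : ℕ, ∀ a z b : Fin n, depth G z = m → Descend G c a → Descend G d b →
    a ≤ z → z ≤ b → depth G a = m → depth G b = m → z ∈ BS G c d := by
  have hdc := depth_d_eq_c hB hcv hcne hdv hdne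
  intro m
  induction m using Nat.strong_induction_on with
  | _ m ih =>
    intro a z b hzm ha hb haz hzb ham hbm
    rcases le_or_gt m (depth G c) with hle | hgt
    · have ha' : a = c := descend_eq_of_depth_le hB ha (by omega)
      have hb' : b = d := descend_eq_of_depth_le hB hb (by omega)
      subst ha'; subst hb'
      have : z = a ∨ z = b := by
        rw [Fin.le_def] at haz hzb
        rcases Nat.lt_or_ge z.val b.val with h | h
        · left; exact Fin.ext (by omega)
        · right; exact Fin.ext (by omega)
      rcases this with rfl | rfl
      · exact Or.inl (descend_refl G z)
      · exact Or.inr (descend_refl G z)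
    · have hane : a ≠ c := fun h => by rw [h] at ham; omega
      have hbne : b ≠ d := fun h => by rw [h] at hbm; omega
      obtain ⟨hpa, ha0⟩ := descend_parent hB ha hane
      obtain ⟨hpb, hb0⟩ := descend_parent hB hb hbne
      have hz0 : 0 < z.val := by
        rcases Nat.eq_zero_or_pos z.val with h0 | h0
        · rw [depth_val_zero h0] at hzm; omega
        · exact h0
      have hpaz : parent G a ≤ parent G z := hB.2 a z ha0 haz
      have hpzb : parent G z ≤ parent G b := hB.2 z b hz0 hzb
      have e1 : depth G (parent G a) = m - 1 := by
        have := depth_parent_succ hB ha0; omega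
      have e2 : depth G (parent G z) = m - 1 := by
        have := depth_parent_succ hB hz0; omega
      have e3 : depth G (parent G b) = m - 1 := by
        have := depth_parent_succ hB hb0; omega
      rcases ih (m - 1) (by omega) _ _ _ e2 hpa hpb hpaz hpzb e1 e3 with h | h
      · exact Or.inl (descend_extend G h)
      · exact Or.inr (descend_extend G h)

include hB hcv hcne hdv hdne hd1 in
lemma convexB : ∀ a z b : Fin n, a ∈ BS G c d → b ∈ BS G c d →
    a ≤ z → z ≤ b → depth G a = depth G z → depth G b = depth G z → z ∈ BS G c d := by
  intro a z b ha hb haz hzb ham hbm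
  rcases ha with ha | ha <;> rcases hb with hb | hb
  · exact Or.inl (descend_convex hB (depth G z) c a z b rfl ha hb haz hzb ham hbm)
  · exact convexB_aux hB hcv hcne hdv hdne hd1 (depth G z) a z b rfl ha hb haz hzb ham hbm
  · exfalso
    have := sep_cd hB hcv hcne hdv hdne hd1 (depth G z) b a hbm hb ha ham
    have : b < b := lt_of_lt_of_le this (le_trans haz hzb)
    exact lt_irrefl _ this
  · exact Or.inr (descend_convex hB (depth G z) d a z b rfl ha hb haz hzb ham hbm)

include hB hcv hcne hdv hdne hd1 in
lemma B_parent_mem : ∀ u : Fin n, u ∈ BS G c d → u ≠ c → u ≠ d → parent G u ∈ BS G c d := by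
  intro u hu huc hud
  rcases hu with h | h
  · exact Or.inl (descend_parent hB h huc).1
  · exact Or.inr (descend_parent hB h hud).1

include hB hd1 in
lemma B_ge_c : ∀ u : Fin n, u ∈ BS G c d → c ≤ u := by
  intro u hu
  rcases hu with h | h
  · exact descend_le hB h
  · exact le_trans (by rw [Fin.le_def]; omega) (descend_le hB h)

include hB hcv hcne hdv hdne in
lemma B_depth_ge : ∀ u : Fin n, u ∈ BS G c d → depth G c ≤ depth G u := by
  intro u hu
  have hdc := depth_d_eq_c hB hcv hcne hdv hdne
  rcases hu with h | h
  · exact descend_depth_le hB h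
  · rw [← hdc]; exact descend_depth_le hB h

include hB hcv hcne hdv hdne in
lemma B_top : ∀ u : Fin n, u ∈ BS G c d → depth G u ≤ depth G c → u = c ∨ u = d := by
  intro u hu hd
  have hdc := depth_d_eq_c hB hcv hcne hdv hdne
  rcases hu with h | h
  · exact Or.inl (descend_eq_of_depth_le hB h hd)
  · exact Or.inr (descend_eq_of_depth_le hB h (by omega))

include hB hcv hcne hdv hdne in
lemma v_not_B : v ∉ BS G c d := by
  intro hv
  have h1 := B_depth_ge hB hcv hcne hdv hdne v hv
  have := depth_c_eq hB hcv hcne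
  omega

include hB in
lemma not_B_parent : ∀ u : Fin n, u ∉ BS G c d → parent G u ∉ BS G c d := by
  intro u hu hp
  apply hu
  rcases hp with h | h
  · exact Or.inl (descend_extend G h)
  · exact Or.inr (descend_extend G h)

include hB hd1 in
lemma B_pos (hc0 : 0 < c.val) : ∀ u : Fin n, u ∈ BS G c d → 0 < u.val := by
  intro u hu
  have := B_ge_c hB hd1 u hu
  rw [Fin.le_def] at this; omega

end Two

section Relabel
variable {n : ℕ} {G : SimpleGraph (Fin n)} {v c d : Fin n}

def HG (G : SimpleGraph (Fin n)) (e : Fin n ≃ Fin n) : SimpleGraph (Fin n) where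
  Adj a b := G.Adj (e.symm a) (e.symm b)
  symm := ⟨fun a b h => G.adj_symm h⟩
  loopless := ⟨fun a h => G.ne_of_adj h rfl⟩

lemma HG_adj (G : SimpleGraph (Fin n)) (e : Fin n ≃ Fin n) (a b : Fin n) :
    (HG G e).Adj a b ↔ G.Adj (e.symm a) (e.symm b) := Iff.rfl

noncomputable def HG_iso (G : SimpleGraph (Fin n)) (e : Fin n ≃ Fin n) : G ≃g HG G e :=
  ⟨e, by intro a b; simp [HG_adj]⟩

variable {e : Fin n ≃ Fin n}
variable (hB : IsBFSEnum G) (hcv : parent G c = v) (hcne : c ≠ v)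
  (hdv : parent G d = v) (hdne : d ≠ v) (hd1 : d.val = c.val + 1)
  (hJ1 : ∀ u, u ∉ BS G c d → e u = u) (hJ2 : ∀ u, depth G (e u) = depth G u)
  (hJ3 : e d = c)

include hJ1 in
lemma eB_mem : ∀ u : Fin n, u ∈ BS G c d → e u ∈ BS G c d := by
  intro u hu
  by_contra h
  have h2 := hJ1 (e u) h
  have := e.injective h2
  rw [this] at h
  exact h hu

include hJ1 in
lemma eB_mem_iff : ∀ u : Fin n, e u ∈ BS G c d ↔ u ∈ BS G c d := by
  intro u
  constructor
  · intro h
    by_contra hu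
    rw [hJ1 u hu] at h
    exact hu h
  · exact eB_mem hJ1 u

include hJ1 in
lemma esymm_fix : ∀ x : Fin n, x ∉ BS G c d → e.symm x = x := by
  intro x hx
  have : e (e.symm x) = e.symm x := by
    by_contra h
    have : e.symm x ∈ BS G c d := by
      by_contra h2
      exact h (hJ1 _ h2)
    rw [← (eB_mem_iff hJ1 (e.symm x)), Equiv.apply_symm_apply] at this
    exact hx this
  have h2 := this
  rw [Equiv.apply_symm_apply] at h2
  exact h2.symm

include hJ1 in
lemma esymm_mem_iff : ∀ x : Fin n, e.symm x ∈ BS G c d ↔ x ∈ BS G c d := by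
  intro x
  rw [← eB_mem_iff hJ1 (e.symm x), Equiv.apply_symm_apply]

include hJ2 in
lemma edepth_symm : ∀ x : Fin n, depth G (e.symm x) = depth G x := by
  intro x
  have := hJ2 (e.symm x)
  rw [Equiv.apply_symm_apply] at this
  exact this.symm

-- P0
include hB hJ1 hJ2 hcv hcne hdv hdne hd1 in
lemma P0 : ∀ u : Fin n, u ∉ BS G c d → 0 < u.val →
    parent (HG G e) (e u) = parent G u := by
  intro u hu hu0
  have heu : e u = u := hJ1 u hu
  have hp : parent G u ∉ BS G c d := not_B_parent hB u hu
  have hep : e.symm (parent G u) = parent G u := esymm_fix hJ1 _ hp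
  have hus : e.symm u = u := esymm_fix hJ1 _ hu
  rw [heu]
  apply parent_eq
  · exact hu0
  · rw [HG_adj, hep, hus]; exact (bfs_spec hB hu0).1
  · intro q hq
    rw [HG_adj, hus] at hq
    set w := e.symm q with hw
    have hqw : q = e w := by rw [hw, Equiv.apply_symm_apply]
    have hmin : parent G u ≤ w := (bfs_spec hB hu0).2 w hq
    by_cases hwB : w ∈ BS G c d
    · -- q = e w ∈ B
      have hqB : q ∈ BS G c d := by rw [hqw]; exact eB_mem hJ1 w hwB
      have hdq : depth G q = depth G w := by rw [hqw]; exact hJ2 w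
      -- depth of parent G u
      have hℓ : depth G u = depth G (parent G u) + 1 := depth_parent_succ hB hu0
      have hadjdep : depth G u ≤ depth G w + 1 := depth_le_of_adj hB hq
      rcases Nat.lt_or_ge (depth G w) (depth G u) with hc1 | hc1
      · -- depth w = depth u - 1 = depth parent
        have hdw : depth G w = depth G (parent G u) := by omega
        by_contra hcon
        have h1 : q < parent G u := not_le.mp hcon
        have h2 : parent G u ≤ w := hmin
        have hpw : parent G u ∈ BS G c d → False := fun h => hp h
        have : parent G u ∈ BS G c d :=
          convexB hB hcv hcne hdv hdne hd1 q (parent G u) w hqB hwB (le_of_lt h1) h2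
            (by omega) (by omega)
        exact hpw this
      · -- depth w ≥ depth u > depth parent
        have : depth G (parent G u) < depth G q := by omega
        exact le_of_lt (lt_of_depth_lt hB this)
    · rw [esymm_fix hJ1 q (by rw [hqw]; intro h; exact hwB ((eB_mem_iff hJ1 w).mp h))] at hw
      rw [hw] at hmin
      exact hmin

-- P3
include hB hJ1 hJ2 hcv hcne hdv hdne hd1 in
lemma P3 : ∀ u : Fin n, (u = c ∨ u = d) → parent (HG G e) (e u) = v := by
  intro u hu
  have hc0 : 0 < c.val := c_pos hB hcv hcne
  have huB : u ∈ BS G c d := by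
    rcases hu with rfl | rfl
    · exact Or.inl (descend_refl G u)
    · exact Or.inr (descend_refl G u)
  have heuB : e u ∈ BS G c d := eB_mem hJ1 u huB
  have heu0 : 0 < (e u).val := B_pos hB hd1 hc0 _ heuB
  have hvB : v ∉ BS G c d := v_not_B hB hcv hcne hdv hdne
  have hvs : e.symm v = v := esymm_fix hJ1 _ hvB
  have hus : e.symm (e u) = u := e.symm_apply_apply u
  have hpu : parent G u = v := by rcases hu with rfl | rfl; exacts [hcv, hdv]
  have hu0 : 0 < u.val := B_pos hB hd1 hc0 _ huB
  apply parent_eq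
  · exact heu0
  · rw [HG_adj, hvs, hus]
    have := (bfs_spec hB hu0).1
    rw [hpu] at this
    exact this
  · intro q hq
    rw [HG_adj, hus] at hq
    set w := e.symm q with hw
    have hqw : q = e w := by rw [hw, Equiv.apply_symm_apply]
    have hmin : parent G u ≤ w := (bfs_spec hB hu0).2 w hq
    rw [hpu] at hmin
    by_cases hwB : w ∈ BS G c d
    · have hqB : q ∈ BS G c d := by rw [hqw]; exact eB_mem hJ1 w hwB
      have : c ≤ q := B_ge_c hB hd1 q hqB
      have hvc : v < c := v_lt_c hB hcv hcne
      exact le_of_lt (lt_of_lt_of_le hvc this)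
    · rw [esymm_fix hJ1 q (by rw [hqw]; intro h; exact hwB ((eB_mem_iff hJ1 w).mp h))] at hw
      rw [hw] at hmin
      exact hmin

-- P12
include hB hJ1 hJ2 hcv hcne hdv hdne hd1 in
lemma P12 : ∀ u : Fin n, u ∈ BS G c d → u ≠ c → u ≠ d →
    ∃ z : Fin n, z ∈ BS G c d ∧ depth G z + 1 = depth G u ∧
      parent (HG G e) (e u) = e z ∧ (Descend G d u → Descend G d z) := by
  intro u huB huc hud
  have hc0 : 0 < c.val := c_pos hB hcv hcne
  have hu0 : 0 < u.val := B_pos hB hd1 hc0 _ huB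
  have hdu : depth G c < depth G u := by
    rcases Nat.lt_or_ge (depth G c) (depth G u) with h | h
    · exact h
    · rcases B_top hB hcv hcne hdv hdne u huB h with h1 | h1
      exacts [absurd h1 huc, absurd h1 hud]
  have hpB : parent G u ∈ BS G c d := B_parent_mem hB hcv hcne hdv hdne hd1 u huB huc hud
  have hpd : depth G (parent G u) + 1 = depth G u := (depth_parent_succ hB hu0).symm
  set Z : Set (Fin n) := {z | G.Adj z u ∧ z ∈ BS G c d ∧ depth G z + 1 = depth G u} with hZ
  have hZne : Z.Nonempty := ⟨parent G u, (bfs_spec hB hu0).1, hpB, hpd⟩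
  obtain ⟨z, hzZ, hzmin⟩ := Set.exists_min_image Z (fun z => e z) (Set.toFinite Z) hZne
  obtain ⟨hzadj, hzB, hzd⟩ := hzZ
  refine ⟨z, hzB, hzd, ?_, ?_⟩
  · -- parent = e z
    have heuB : e u ∈ BS G c d := eB_mem hJ1 u huB
    have heu0 : 0 < (e u).val := B_pos hB hd1 hc0 _ heuB
    apply parent_eq
    · exact heu0
    · rw [HG_adj, e.symm_apply_apply, e.symm_apply_apply]; exact hzadj
    · intro q hq
      rw [HG_adj, e.symm_apply_apply] at hq
      set w := e.symm q with hw
      have hqw : q = e w := by rw [hw, Equiv.apply_symm_apply]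
      have hmin : parent G u ≤ w := (bfs_spec hB hu0).2 w hq
      have hadjdep : depth G u ≤ depth G w + 1 := depth_le_of_adj hB hq
      rcases Nat.lt_or_ge (depth G w) (depth G u) with hc1 | hc1
      · -- depth w + 1 = depth u
        have hdw : depth G w + 1 = depth G u := by
          have := depth_mono hB (le_of_lt (hB.1 u hu0))
          omega
        by_cases hwB : w ∈ BS G c d
        · have : w ∈ Z := ⟨hq, hwB, hdw⟩
          rw [hqw]
          exact hzmin w this
        · -- w outside: z's image < w
          have hew : e w = w := hJ1 w hwB
          rw [hqw, hew]
          by_contra hcon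
          have h1 : w < e z := not_le.mp hcon
          have hezB : e z ∈ BS G c d := eB_mem hJ1 z hzB
          have : w ∈ BS G c d :=
            convexB hB hcv hcne hdv hdne hd1 (parent G u) w (e z) hpB hezB hmin
              (le_of_lt h1) (by omega) (by rw [hJ2]; omega)
          exact hwB this
      · -- depth w ≥ depth u
        have h1 : depth G (e z) < depth G q := by
          rw [hJ2, hqw, hJ2]; omega
        exact le_of_lt (lt_of_depth_lt hB h1)
  · -- S_d preservation
    intro hud2
    rcases hzB with hzc | hzd2
    · exfalso
      exact nocross hB hcv hcne hdv hdne hd1 u z hud2 hzc hzd hzadj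
    · exact hzd2

end Relabel

section Relabel2
variable {n : ℕ} {G : SimpleGraph (Fin n)} {v c d : Fin n} {e : Fin n ≃ Fin n}
variable (hB : IsBFSEnum G) (hcv : parent G c = v) (hcne : c ≠ v)
  (hdv : parent G d = v) (hdne : d ≠ v) (hd1 : d.val = c.val + 1)
  (hJ1 : ∀ u, u ∉ BS G c d → e u = u) (hJ2 : ∀ u, depth G (e u) = depth G u)
  (hJ3 : e d = c)

include hB hcv hcne hdv hdne hd1 hJ1 hJ2 in
lemma hh_neighbor : ∀ x : Fin n, 0 < x.val → ∃ q, (HG G e).Adj q x := by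
  intro x hx0
  set u := e.symm x with hu
  have hu0 : 0 < u.val := by
    by_cases huB : u ∈ BS G c d
    · exact B_pos hB hd1 (c_pos hB hcv hcne) u huB
    · have : u = x := by rw [hu]; exact esymm_fix hJ1 x (by rwa [← esymm_mem_iff hJ1 x, ← hu])
      rw [this]; exact hx0
  refine ⟨e (parent G u), ?_⟩
  rw [HG_adj, e.symm_apply_apply, ← hu]
  exact (bfs_spec hB hu0).1

include hB hcv hcne hdv hdne hd1 hJ1 hJ2 in
lemma hh_spec : ∀ x : Fin n, 0 < x.val →
    (HG G e).Adj (parent (HG G e) x) x ∧ ∀ q, (HG G e).Adj q x → parent (HG G e) x ≤ q := by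
  intro x hx0
  obtain ⟨q, hq⟩ := hh_neighbor hB hcv hcne hdv hdne hd1 hJ1 hJ2 x hx0
  exact parent_spec _ hx0 hq

include hB hcv hcne hdv hdne hd1 hJ1 hJ2 hJ3 in
lemma DP : ∀ x : Fin n, 0 < x.val →
    depth G (parent (HG G e) x) + 1 = depth G x := by
  intro x hx0
  set u := e.symm x with hu
  have hex : e u = x := by rw [hu, Equiv.apply_symm_apply]
  have hdux : depth G u = depth G x := by rw [hu]; exact edepth_symm hJ2 x
  by_cases huB : u ∈ BS G c d
  · by_cases huc : u = c
    · have := P3 hB hcv hcne hdv hdne hd1 hJ1 hJ2 u (Or.inl huc)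
      rw [hex] at this; rw [this]
      have := depth_c_eq hB hcv hcne
      rw [← hdux, huc]; omega
    by_cases hud : u = d
    · have := P3 hB hcv hcne hdv hdne hd1 hJ1 hJ2 u (Or.inr hud)
      rw [hex] at this; rw [this]
      have h1 := depth_c_eq hB hcv hcne
      have h2 := depth_d_eq_c hB hcv hcne hdv hdne
      rw [← hdux, hud]; omega
    · obtain ⟨z, hzB, hzd, hpz, -⟩ := P12 hB hcv hcne hdv hdne hd1 hJ1 hJ2 u huB huc hud
      rw [hex] at hpz; rw [hpz, hJ2 z]
      omega
  · have hu0 : 0 < u.val := by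
      have : u = x := by rw [hu]; exact esymm_fix hJ1 x (by rwa [← esymm_mem_iff hJ1 x, ← hu])
      rw [this]; exact hx0
    have := P0 hB hcv hcne hdv hdne hd1 hJ1 hJ2 u huB hu0
    rw [hex] at this; rw [this]
    have := depth_parent_succ hB hu0
    omega

include hB hcv hcne hdv hdne hd1 hJ1 hJ2 hJ3 in
lemma PLT : ∀ x : Fin n, 0 < x.val → parent (HG G e) x < x := by
  intro x hx0
  have := DP hB hcv hcne hdv hdne hd1 hJ1 hJ2 hJ3 x hx0
  exact lt_of_depth_lt hB (by omega)

end Relabel2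

section ChainMono
variable {n : ℕ}

lemma chain_mono {α : Type*} [Preorder α] (f : Fin n → α) (x y : Fin n) (hxy : x ≤ y)
    (h : ∀ z : Fin n, x ≤ z → z < y → ∀ hz : z.val + 1 < n, f z ≤ f ⟨z.val + 1, hz⟩) :
    f x ≤ f y := by
  suffices H : ∀ k : ℕ, ∀ y : Fin n, y.val = x.val + k →
      (∀ z : Fin n, x ≤ z → z < y → ∀ hz : z.val + 1 < n, f z ≤ f ⟨z.val + 1, hz⟩) →
      f x ≤ f y by
    exact H (y.val - x.val) y (by rw [Fin.le_def] at hxy; omega) h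
  intro k
  induction k with
  | zero => intro y hy _; have : y = x := Fin.ext (by omega); rw [this]
  | succ k ih =>
    intro y hy hstep
    have hy' : x.val + k < n := by have := y.isLt; omega
    set y' : Fin n := ⟨x.val + k, hy'⟩ with hy'def
    have hvy' : y'.val = x.val + k := rfl
    have h1 : f x ≤ f y' := by
      apply ih y' hvy'
      intro z hz1 hz2 hz3
      exact hstep z hz1 (lt_trans hz2 (by rw [Fin.lt_def, hvy']; omega)) hz3
    have h2 : f y' ≤ f y := by
      have hlt : y'.val + 1 < n := by have := y.isLt; omega
      have hyy : y = ⟨y'.val + 1, hlt⟩ := Fin.ext (by simp only [hvy', Fin.val_mk]; omega)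
      rw [hyy]
      exact hstep y' (by rw [Fin.le_def, hvy']; omega)
        (by rw [Fin.lt_def, hvy']; omega) _
    exact le_trans h1 h2

end ChainMono

section Enc
variable {n : ℕ}

noncomputable def encv (n B : ℕ) (f : Fin n → ℕ) : ℕ :=
  ∑ i : Fin n, f i * B ^ (n - 1 - i.val)

lemma geo_sum (B : ℕ) (hB1 : 1 ≤ B) (k : ℕ) :
    (∑ t ∈ Finset.range k, (B - 1) * B ^ t) + 1 = B ^ k := by
  induction k with
  | zero => simp
  | succ k ih =>
    rw [Finset.sum_range_succ, pow_succ]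
    have h1 : B ^ k ≥ 1 := Nat.one_le_pow _ _ (by omega)
    have : (B - 1) * B ^ k + B ^ k = B ^ k * B := by
      have : (B - 1) * B ^ k + 1 * B ^ k = ((B - 1) + 1) * B ^ k := by ring
      rw [one_mul] at this
      rw [this]
      have : B - 1 + 1 = B := by omega
      rw [this]; ring
    omega

lemma enc_lt (B : ℕ) (hB1 : 1 ≤ B) (f g : Fin n → ℕ) (hf : ∀ i, f i < B)
    (i0 : Fin n) (hpre : ∀ j, j < i0 → f j = g j) (hi : f i0 < g i0) :
    encv n B f < encv n B g := by
  classical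
  set k := n - 1 - i0.val with hk
  set T : Finset (Fin n) := Finset.univ.filter (fun j => i0 < j) with hT
  have hsplit : ∀ h : Fin n → ℕ, encv n B h =
      (∑ i ∈ Finset.univ.filter (fun j => j < i0), h i * B ^ (n - 1 - i.val))
      + (h i0 * B ^ k + ∑ i ∈ T, h i * B ^ (n - 1 - i.val)) := by
    intro h
    rw [encv, ← Finset.sum_filter_add_sum_filter_not Finset.univ (fun j => j < i0)]
    congr 1
    have : Finset.univ.filter (fun j : Fin n => ¬ j < i0) = insert i0 T := by
      ext j
      simp only [Finset.mem_filter, Finset.mem_univ, true_and, Finset.mem_insert, hT,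
        Fin.lt_def, not_lt]
      constructor
      · intro hj
        rcases Nat.eq_or_lt_of_le hj with h1 | h1
        · left; exact Fin.ext h1.symm
        · right; simpa using h1
      · rintro (rfl | hj)
        · omega
        · simp at hj; omega
    rw [this, Finset.sum_insert (by simp [hT])]
  have hkey : (∑ i ∈ T, f i * B ^ (n - 1 - i.val)) < B ^ k := by
    rcases Finset.eq_empty_or_nonempty T with hTe | hTne
    · rw [hTe]; simp; exact Nat.one_le_pow _ _ (by omega)
    · have hbound : ∀ j ∈ T, n - 1 - j.val < k := by
        intro j hj
        simp only [hT, Finset.mem_filter, Finset.mem_univ, true_and, Fin.lt_def] at hj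
        have := j.isLt
        have := i0.isLt
        omega
      calc (∑ i ∈ T, f i * B ^ (n - 1 - i.val))
          ≤ ∑ i ∈ T, (B - 1) * B ^ (n - 1 - i.val) := by
            apply Finset.sum_le_sum
            intro i hi2
            exact Nat.mul_le_mul_right _ (by have := hf i; omega)
        _ = ∑ t ∈ T.image (fun j : Fin n => n - 1 - j.val), (B - 1) * B ^ t := by
            rw [Finset.sum_image]
            intro a ha b hb hab
            have ha' := a.isLt; have hb' := b.isLt
            simp only [hT, Finset.mem_filter, Finset.mem_univ, true_and, Fin.lt_def] at ha hb
            exact Fin.ext (by simp only at hab; omega)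
        _ ≤ ∑ t ∈ Finset.range k, (B - 1) * B ^ t := by
            apply Finset.sum_le_sum_of_subset
            intro t ht
            simp only [Finset.mem_image] at ht
            obtain ⟨j, hj, rfl⟩ := ht
            exact Finset.mem_range.mpr (hbound j hj)
        _ < B ^ k := by have := geo_sum B hB1 k; omega
  rw [hsplit f, hsplit g]
  have hA : (∑ i ∈ Finset.univ.filter (fun j => j < i0), f i * B ^ (n - 1 - i.val))
      = (∑ i ∈ Finset.univ.filter (fun j => j < i0), g i * B ^ (n - 1 - i.val)) := by
    apply Finset.sum_congr rfl
    intro j hj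
    simp only [Finset.mem_filter] at hj
    rw [hpre j hj.2]
  rw [hA]
  have h2 : f i0 * B ^ k + (∑ i ∈ T, f i * B ^ (n - 1 - i.val)) <
      g i0 * B ^ k + (∑ i ∈ T, g i * B ^ (n - 1 - i.val)) := by
    have : f i0 * B ^ k + B ^ k ≤ g i0 * B ^ k := by
      have : (f i0 + 1) * B ^ k ≤ g i0 * B ^ k := Nat.mul_le_mul_right _ (by omega)
      calc f i0 * B ^ k + B ^ k = (f i0 + 1) * B ^ k := by ring
        _ ≤ g i0 * B ^ k := this
    omega
  omega

end Enc

section Tswap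
variable {n : ℕ} {G : SimpleGraph (Fin n)} {v c d : Fin n} {e : Fin n ≃ Fin n}
variable (hB : IsBFSEnum G) (hcv : parent G c = v) (hcne : c ≠ v)
  (hdv : parent G d = v) (hdne : d ≠ v) (hd1 : d.val = c.val + 1)
  (hJ1 : ∀ u, u ∉ BS G c d → e u = u) (hJ2 : ∀ u, depth G (e u) = depth G u)
  (hJ3 : e d = c)

lemma HG_swap_adj (x y a b : Fin n) :
    (HG G (e.trans (Equiv.swap x y))).Adj a b ↔
      (HG G e).Adj (Equiv.swap x y a) (Equiv.swap x y b) := by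
  rw [HG_adj, HG_adj, Equiv.symm_trans_apply, Equiv.symm_trans_apply, Equiv.symm_swap]

include hB hcv hcne hdv hdne hd1 hJ1 hJ2 hJ3 in
lemma Tswap {x y : Fin n} (hx0 : 0 < x.val) (hy1 : y.val = x.val + 1)
    (hdxy : depth G x = depth G y) :
    (∀ i : Fin n, i < x → parent (HG G (e.trans (Equiv.swap x y))) i = parent (HG G e) i) ∧
    parent (HG G (e.trans (Equiv.swap x y))) x = parent (HG G e) y := by
  have hy0 : 0 < y.val := by omega
  have hxy : x ≠ y := fun h => by rw [h] at hy1; omega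
  have hxlty : x < y := by rw [Fin.lt_def]; omega
  constructor
  · intro i hix
    rcases Nat.eq_zero_or_pos i.val with h0 | h0
    · rw [parent_val_zero _ h0, parent_val_zero _ h0]
    · set p := parent (HG G e) i with hp
      have hspec := hh_spec hB hcv hcne hdv hdne hd1 hJ1 hJ2 i h0
      have hdp : depth G p + 1 = depth G i := DP hB hcv hcne hdv hdne hd1 hJ1 hJ2 hJ3 i h0
      have hdix : depth G i ≤ depth G x := depth_mono hB (le_of_lt hix)
      have hplx : p < x := lt_of_depth_lt hB (by omega)
      have hply : p < y := lt_trans hplx hxlty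
      have hinx : i ≠ x := ne_of_lt hix
      have hiny : i ≠ y := ne_of_lt (lt_trans hix hxlty)
      apply parent_eq _ h0
      · rw [HG_swap_adj, Equiv.swap_apply_of_ne_of_ne (ne_of_lt hplx) (ne_of_lt hply),
          Equiv.swap_apply_of_ne_of_ne hinx hiny]
        exact hspec.1
      · intro q hq
        rw [HG_swap_adj, Equiv.swap_apply_of_ne_of_ne hinx hiny] at hq
        have := hspec.2 _ hq
        rcases eq_or_ne q x with rfl | hqx
        · exact le_of_lt hplx
        rcases eq_or_ne q y with rfl | hqy
        · exact le_of_lt hply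
        · rwa [Equiv.swap_apply_of_ne_of_ne hqx hqy] at this
  · set p := parent (HG G e) y with hp
    have hspec := hh_spec hB hcv hcne hdv hdne hd1 hJ1 hJ2 y hy0
    have hdp : depth G p + 1 = depth G y := DP hB hcv hcne hdv hdne hd1 hJ1 hJ2 hJ3 y hy0
    have hplx : p < x := lt_of_depth_lt hB (by omega)
    have hply : p < y := lt_trans hplx hxlty
    apply parent_eq _ hx0
    · rw [HG_swap_adj, Equiv.swap_apply_of_ne_of_ne (ne_of_lt hplx) (ne_of_lt hply),
        Equiv.swap_apply_left]
      exact hspec.1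
    · intro q hq
      rw [HG_swap_adj, Equiv.swap_apply_left] at hq
      have := hspec.2 _ hq
      rcases eq_or_ne q x with rfl | hqx
      · exact le_of_lt hplx
      rcases eq_or_ne q y with rfl | hqy
      · exact le_of_lt hply
      · rwa [Equiv.swap_apply_of_ne_of_ne hqx hqy] at this

end Tswap

section Good
variable {n : ℕ} {G : SimpleGraph (Fin n)} {v c d : Fin n}
variable (hB : IsBFSEnum G) (hcv : parent G c = v) (hcne : c ≠ v)
  (hdv : parent G d = v) (hdne : d ≠ v) (hd1 : d.val = c.val + 1)

include hB hcv hcne hdv hdne hd1 in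
lemma exists_good : ∃ e : Fin n ≃ Fin n,
    (∀ u, u ∉ BS G c d → e u = u) ∧ (∀ u, depth G (e u) = depth G u) ∧ e d = c ∧
    IsBFSEnum (HG G e) := by
  classical
  have hc0 := c_pos hB hcv hcne
  have hdc := depth_d_eq_c hB hcv hcne hdv hdne
  have hcB : c ∈ BS G c d := Or.inl (descend_refl G c)
  have hdB : d ∈ BS G c d := Or.inr (descend_refl G d)
  set E : Set (Fin n ≃ Fin n) :=
    {e | (∀ u, u ∉ BS G c d → e u = u) ∧ (∀ u, depth G (e u) = depth G u) ∧ e d = c} with hE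
  have hswap : Equiv.swap c d ∈ E := by
    refine ⟨?_, ?_, Equiv.swap_apply_right c d⟩
    · intro u hu
      exact Equiv.swap_apply_of_ne_of_ne (fun h => hu (h ▸ hcB)) (fun h => hu (h ▸ hdB))
    · intro u
      rcases eq_or_ne u c with rfl | h1
      · rw [Equiv.swap_apply_left]; omega
      rcases eq_or_ne u d with rfl | h2
      · rw [Equiv.swap_apply_right]; omega
      · rw [Equiv.swap_apply_of_ne_of_ne h1 h2]
  obtain ⟨e, heE, hemin⟩ := Set.exists_min_image E
    (fun e => encv n n (fun i => (parent (HG G e) i).val)) (Set.toFinite E) ⟨_, hswap⟩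
  obtain ⟨hJ1, hJ2, hJ3⟩ := heE
  refine ⟨e, hJ1, hJ2, hJ3, PLT hB hcv hcne hdv hdne hd1 hJ1 hJ2 hJ3, ?_⟩
  intro x y hx0 hxy
  by_contra hcon
  have hcon' : parent (HG G e) y < parent (HG G e) x := not_le.mp hcon
  have hnot : ¬ (∀ z : Fin n, x ≤ z → z < y → ∀ hz : z.val + 1 < n,
      parent (HG G e) z ≤ parent (HG G e) ⟨z.val + 1, hz⟩) :=
    fun h => absurd (chain_mono _ x y hxy h) (not_le.mpr hcon')
  push_neg at hnot
  obtain ⟨z, hxz, hzy, hz1, hlt⟩ := hnot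
  set y' : Fin n := ⟨z.val + 1, hz1⟩ with hy'def
  have hy'1 : y'.val = z.val + 1 := rfl
  have hz0 : 0 < z.val := by rw [Fin.le_def] at hxz; omega
  have hy'0 : 0 < y'.val := by omega
  have hzley' : z ≤ y' := by rw [Fin.le_def]; omega
  have hzlty' : z < y' := by rw [Fin.lt_def]; omega
  have hdzy : depth G z ≤ depth G y' := depth_mono hB hzley'
  have hDz := DP hB hcv hcne hdv hdne hd1 hJ1 hJ2 hJ3 z hz0
  have hDy' := DP hB hcv hcne hdv hdne hd1 hJ1 hJ2 hJ3 y' hy'0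
  rcases lt_or_eq_of_le hdzy with hdlt | hdeq
  · exact absurd (lt_of_depth_lt hB (show depth G (parent (HG G e) z) <
      depth G (parent (HG G e) y') by omega)) (not_lt.mpr (le_of_lt hlt))
  -- same depth
  set u := e.symm z with hu
  set u' := e.symm y' with hu'
  have hez : e u = z := by rw [hu, Equiv.apply_symm_apply]
  have hey' : e u' = y' := by rw [hu', Equiv.apply_symm_apply]
  have hduz : depth G u = depth G z := by rw [hu]; exact edepth_symm hJ2 z
  have hdu'y : depth G u' = depth G y' := by rw [hu']; exact edepth_symm hJ2 y'
  by_cases huB : u ∈ BS G c d <;> by_cases hu'B : u' ∈ BS G c d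
  · -- both in B
    have hzB : z ∈ BS G c d := by rw [← hez]; exact eB_mem hJ1 u huB
    have hy'B : y' ∈ BS G c d := by rw [← hey']; exact eB_mem hJ1 u' hu'B
    by_cases hℓtop : depth G z ≤ depth G c
    · have hutop : u = c ∨ u = d := B_top hB hcv hcne hdv hdne u huB (by omega)
      have hu'top : u' = c ∨ u' = d := B_top hB hcv hcne hdv hdne u' hu'B (by omega)
      have h1 := P3 hB hcv hcne hdv hdne hd1 hJ1 hJ2 u hutop
      have h2 := P3 hB hcv hcne hdv hdne hd1 hJ1 hJ2 u' hu'top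
      rw [hez] at h1; rw [hey'] at h2
      rw [h1, h2] at hlt
      exact lt_irrefl _ hlt
    · push_neg at hℓtop
      have hzc : z ≠ c := fun h => by rw [h] at hℓtop; omega
      have hcltz : c < z := lt_of_le_of_ne (B_ge_c hB hd1 z hzB) (Ne.symm hzc)
      set e' := e.trans (Equiv.swap z y') with he'
      have hswapdep : ∀ w, depth G (Equiv.swap z y' w) = depth G w := by
        intro w
        rcases eq_or_ne w z with rfl | h1
        · rw [Equiv.swap_apply_left]; omega
        rcases eq_or_ne w y' with rfl | h2
        · rw [Equiv.swap_apply_right]; omega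
        · rw [Equiv.swap_apply_of_ne_of_ne h1 h2]
      have hJ1' : ∀ u₀, u₀ ∉ BS G c d → e' u₀ = u₀ := by
        intro u₀ h
        rw [he', Equiv.trans_apply, hJ1 u₀ h]
        exact Equiv.swap_apply_of_ne_of_ne (fun hh => h (hh ▸ hzB)) (fun hh => h (hh ▸ hy'B))
      have hJ2' : ∀ u₀, depth G (e' u₀) = depth G u₀ := by
        intro u₀
        rw [he', Equiv.trans_apply, hswapdep, hJ2]
      have hJ3' : e' d = c := by
        rw [he', Equiv.trans_apply, hJ3]
        exact Equiv.swap_apply_of_ne_of_ne (ne_of_lt hcltz)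
          (ne_of_lt (lt_trans hcltz hzlty'))
      have he'E : e' ∈ E := ⟨hJ1', hJ2', hJ3'⟩
      obtain ⟨hT1, hT2⟩ := Tswap hB hcv hcne hdv hdne hd1 hJ1 hJ2 hJ3 hz0 hy'1 hdeq
      have hENC : encv n n (fun i => (parent (HG G e') i).val) <
          encv n n (fun i => (parent (HG G e) i).val) := by
        apply enc_lt n (by omega) _ _ (fun i => (parent (HG G e') i).isLt) z
        · intro j hj
          rw [← he'] at hT1
          rw [hT1 j hj]
        · rw [← he'] at hT2
          rw [hT2]
          rw [Fin.lt_def] at hlt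
          exact hlt
      exact absurd (hemin e' he'E) (not_le.mpr hENC)
  · -- u ∈ B, u' ∉ B
    have hzB : z ∈ BS G c d := by rw [← hez]; exact eB_mem hJ1 u huB
    have hy'nB : y' ∉ BS G c d := fun h => hu'B ((esymm_mem_iff hJ1 y').mpr h)
    have hu'y : u' = y' := by rw [hu']; exact esymm_fix hJ1 y' hy'nB
    have hPy' : parent (HG G e) y' = parent G y' := by
      have := P0 hB hcv hcne hdv hdne hd1 hJ1 hJ2 u' hu'B (by rw [hu'y]; exact hy'0)
      rw [hey'] at this; rw [this, hu'y]
    by_cases hutop : u = c ∨ u = d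
    · have h1 := P3 hB hcv hcne hdv hdne hd1 hJ1 hJ2 u hutop
      rw [hez] at h1
      have hztop : z = c ∨ z = d := by
        apply B_top hB hcv hcne hdv hdne z hzB
        rcases hutop with rfl | rfl
        · omega
        · omega
      rcases hztop with rfl | hzd
      · -- z = c: y' = d ∈ B, contradiction
        apply hy'nB
        have : y' = d := Fin.ext (by omega)
        rw [this]; exact hdB
      · -- z = d
        have hdly : d ≤ y' := by rw [Fin.le_def]; rw [hzd] at hy'1; omega
        have : parent G d ≤ parent G y' := hB.2 d y' (by omega) hdly
        rw [hdv] at this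
        rw [h1, hPy'] at hlt
        exact absurd this (not_le.mpr hlt)
    · push_neg at hutop
      obtain ⟨zz, hzzB, hzzd, hpz, -⟩ :=
        P12 hB hcv hcne hdv hdne hd1 hJ1 hJ2 u huB hutop.1 hutop.2
      rw [hez] at hpz
      have hℓc : depth G c < depth G u := by
        rcases Nat.lt_or_ge (depth G c) (depth G u) with h | h
        · exact h
        · rcases B_top hB hcv hcne hdv hdne u huB h with h1 | h1
          exacts [absurd h1 hutop.1, absurd h1 hutop.2]
      have hzc : z ≠ c := fun h => by rw [h] at hduz; omega
      have hzd : z ≠ d := fun h => by rw [h] at hduz; omega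
      have hpzB : parent G z ∈ BS G c d := B_parent_mem hB hcv hcne hdv hdne hd1 z hzB hzc hzd
      have hw0 : depth G (parent G z) + 1 = depth G z := (depth_parent_succ hB hz0).symm
      have hmon : parent G z ≤ parent G y' := hB.2 z y' hz0 hzley'
      have hpy'nB : parent G y' ∉ BS G c d := not_B_parent hB y' hy'nB
      rw [hpz, hPy'] at hlt
      apply hpy'nB
      apply convexB hB hcv hcne hdv hdne hd1 (parent G z) (parent G y') (e zz) hpzB
        (eB_mem hJ1 zz hzzB) hmon (le_of_lt hlt)
      · have := depth_parent_succ hB hy'0; omega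
      · have h1 := hJ2 zz
        have := depth_parent_succ hB hy'0
        omega
  · -- u ∉ B, u' ∈ B
    have hy'B : y' ∈ BS G c d := by rw [← hey']; exact eB_mem hJ1 u' hu'B
    have hznB : z ∉ BS G c d := fun h => huB ((esymm_mem_iff hJ1 z).mpr h)
    have huz : u = z := by rw [hu]; exact esymm_fix hJ1 z hznB
    have hPz : parent (HG G e) z = parent G z := by
      have := P0 hB hcv hcne hdv hdne hd1 hJ1 hJ2 u huB (by rw [huz]; exact hz0)
      rw [hez] at this; rw [this, huz]
    by_cases hu'top : u' = c ∨ u' = d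
    · have h2 := P3 hB hcv hcne hdv hdne hd1 hJ1 hJ2 u' hu'top
      rw [hey'] at h2
      have hy'top : y' = c ∨ y' = d := by
        apply B_top hB hcv hcne hdv hdne y' hy'B
        rcases hu'top with rfl | rfl
        · omega
        · omega
      rcases hy'top with hyc | hyd
      · -- y' = c : z < c
        have hzlec : z ≤ c := by rw [Fin.le_def]; rw [hyc] at hy'1; omega
        have : parent G z ≤ parent G c := hB.2 z c hz0 hzlec
        rw [hcv] at this
        rw [h2, hPz] at hlt
        exact absurd this (not_le.mpr hlt)
      · -- y' = d: z = c ∈ B, contra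
        apply hznB
        have : z = c := Fin.ext (by rw [hyd] at hy'1; omega)
        rw [this]; exact hcB
    · push_neg at hu'top
      obtain ⟨zz, hzzB, hzzd, hpy, -⟩ :=
        P12 hB hcv hcne hdv hdne hd1 hJ1 hJ2 u' hu'B hu'top.1 hu'top.2
      rw [hey'] at hpy
      have hℓc : depth G c < depth G u' := by
        rcases Nat.lt_or_ge (depth G c) (depth G u') with h | h
        · exact h
        · rcases B_top hB hcv hcne hdv hdne u' hu'B h with h1 | h1
          exacts [absurd h1 hu'top.1, absurd h1 hu'top.2]
      have hy'c : y' ≠ c := fun h => by rw [h] at hdu'y; omega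
      have hy'd : y' ≠ d := fun h => by rw [h] at hdu'y; omega
      have hpy'B : parent G y' ∈ BS G c d :=
        B_parent_mem hB hcv hcne hdv hdne hd1 y' hy'B hy'c hy'd
      have hmon : parent G z ≤ parent G y' := hB.2 z y' hz0 hzley'
      have hpznB : parent G z ∉ BS G c d := not_B_parent hB z hznB
      rw [hpy, hPz] at hlt
      apply hpznB
      apply convexB hB hcv hcne hdv hdne hd1 (e zz) (parent G z) (parent G y')
        (eB_mem hJ1 zz hzzB) hpy'B (le_of_lt hlt) hmon
      · have h1 := hJ2 zz
        have := depth_parent_succ hB hz0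
        omega
      · have h1 := depth_parent_succ hB hy'0
        have h2 := depth_parent_succ hB hz0
        omega
  · -- both outside B
    have hznB : z ∉ BS G c d := fun h => huB ((esymm_mem_iff hJ1 z).mpr h)
    have hy'nB : y' ∉ BS G c d := fun h => hu'B ((esymm_mem_iff hJ1 y').mpr h)
    have huz : u = z := by rw [hu]; exact esymm_fix hJ1 z hznB
    have hu'y : u' = y' := by rw [hu']; exact esymm_fix hJ1 y' hy'nB
    have hPz : parent (HG G e) z = parent G z := by
      have := P0 hB hcv hcne hdv hdne hd1 hJ1 hJ2 u huB (by rw [huz]; exact hz0)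
      rw [hez] at this; rw [this, huz]
    have hPy' : parent (HG G e) y' = parent G y' := by
      have := P0 hB hcv hcne hdv hdne hd1 hJ1 hJ2 u' hu'B (by rw [hu'y]; exact hy'0)
      rw [hey'] at this; rw [this, hu'y]
    rw [hPz, hPy'] at hlt
    exact absurd (hB.2 z y' hz0 hzley') (not_le.mpr hlt)

end Good

section Weights
variable {n : ℕ} {G : SimpleGraph (Fin n)} {v c d : Fin n} {e : Fin n ≃ Fin n}
variable (hB : IsBFSEnum G) (hcv : parent G c = v) (hcne : c ≠ v)
  (hdv : parent G d = v) (hdne : d ≠ v) (hd1 : d.val = c.val + 1)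
  (hJ1 : ∀ u, u ∉ BS G c d → e u = u) (hJ2 : ∀ u, depth G (e u) = depth G u)
  (hJ3 : e d = c)

include hB hcv hcne hdv hdne hd1 hJ1 hJ2 hJ3 in
lemma descend_H_of_Sd : ∀ u : Fin n, Descend G d u → Descend (HG G e) c (e u) := by
  suffices H : ∀ m : ℕ, ∀ u : Fin n, depth G u = m → Descend G d u →
      Descend (HG G e) c (e u) by
    intro u hu; exact H (depth G u) u rfl hu
  intro m
  induction m using Nat.strong_induction_on with
  | _ m ih =>
    intro u hum hu
    rcases le_or_gt m (depth G d) with hle | hgt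
    · have : u = d := descend_eq_of_depth_le hB hu (by omega)
      rw [this, hJ3]; exact descend_refl _ _
    · have hund : u ≠ d := fun h => by rw [h] at hum; omega
      have hunc : u ≠ c := by
        intro h
        exact disj_cd hB hcv hcne hdv hdne hd1 u (h ▸ descend_refl G c) hu
      obtain ⟨z, hzB, hzd, hpz, hpres⟩ :=
        P12 hB hcv hcne hdv hdne hd1 hJ1 hJ2 u (Or.inr hu) hunc hund
      have hzSd : Descend G d z := hpres hu
      have := ih (depth G z) (by omega) z rfl hzSd
      apply descend_extend
      rw [hpz]
      exact this

include hB hcv hcne hdv hdne hd1 hJ1 hJ2 hJ3 in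
lemma weight_d_le : weight G d ≤ weight (HG G e) c := by
  apply Nat.card_le_card_of_injective
    (fun p : {u : Fin n // Descend G d u} =>
      (⟨e p.1, descend_H_of_Sd hB hcv hcne hdv hdne hd1 hJ1 hJ2 hJ3 p.1 p.2⟩ :
        {x : Fin n // Descend (HG G e) c x}))
  intro a b hab
  have := congrArg Subtype.val hab
  exact Subtype.ext (e.injective this)

include hB hcv hcne hdv hdne hd1 hJ1 hJ2 in
lemma out_chain : ∀ k : ℕ, ∀ w : Fin n, w ∉ BS G c d →
    (parent (HG G e))^[k] w = (parent G)^[k] w := by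
  intro k
  induction k with
  | zero => intro w _; rfl
  | succ k ih =>
    intro w hw
    rw [Function.iterate_succ_apply, Function.iterate_succ_apply]
    have hstep : parent (HG G e) w = parent G w := by
      rcases Nat.eq_zero_or_pos w.val with h0 | h0
      · rw [parent_val_zero _ h0, parent_val_zero _ h0]
      · have := P0 hB hcv hcne hdv hdne hd1 hJ1 hJ2 w hw h0
        rw [hJ1 w hw] at this
        exact this
    rw [hstep]
    exact ih (parent G w) (not_B_parent hB w hw)

include hB hcv hcne hdv hdne hd1 hJ1 hJ2 in
lemma out_descend : ∀ w : Fin n, w ∉ BS G c d → ∀ i : Fin n,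
    (Descend (HG G e) i w ↔ Descend G i w) := by
  intro w hw i
  constructor
  · rintro ⟨k, hk⟩
    exact ⟨k, by rw [← out_chain hB hcv hcne hdv hdne hd1 hJ1 hJ2 k w hw]; exact hk⟩
  · rintro ⟨k, hk⟩
    exact ⟨k, by rw [out_chain hB hcv hcne hdv hdne hd1 hJ1 hJ2 k w hw]; exact hk⟩

include hB hcv hcne hdv hdne hd1 hJ1 hJ2 hJ3 in
lemma HV : ∀ m : ℕ, ∀ u : Fin n, depth G u = m → u ∈ BS G c d →
    Descend (HG G e) v (e u) ∧
      (∀ i : Fin n, i ∉ BS G c d → Descend (HG G e) i (e u) → Descend (HG G e) i v) := by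
  intro m
  induction m using Nat.strong_induction_on with
  | _ m ih =>
    intro u hum huB
    rcases le_or_gt m (depth G c) with hle | hgt
    · have hutop : u = c ∨ u = d := B_top hB hcv hcne hdv hdne u huB (by omega)
      have hP := P3 hB hcv hcne hdv hdne hd1 hJ1 hJ2 u hutop
      constructor
      · apply descend_extend
        rw [hP]
        exact descend_refl _ _
      · intro i hi hdesc
        obtain ⟨k, hk⟩ := hdesc
        rcases k with _ | k
        · simp only [Function.iterate_zero, id_eq] at hk
          exact absurd (hk ▸ eB_mem hJ1 u huB) hi
        · rw [Function.iterate_succ_apply, hP] at hk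
          exact ⟨k, hk⟩
    · have hunc : u ≠ c := fun h => by rw [h] at hum; omega
      have hund : u ≠ d := by
        intro h
        rw [h] at hum
        have := depth_d_eq_c hB hcv hcne hdv hdne
        omega
      obtain ⟨z, hzB, hzd, hpz, -⟩ :=
        P12 hB hcv hcne hdv hdne hd1 hJ1 hJ2 u huB hunc hund
      obtain ⟨ih1, ih2⟩ := ih (depth G z) (by omega) z rfl hzB
      constructor
      · apply descend_extend
        rw [hpz]
        exact ih1
      · intro i hi hdesc
        obtain ⟨k, hk⟩ := hdesc
        rcases k with _ | k
        · simp only [Function.iterate_zero, id_eq] at hk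
          exact absurd (hk ▸ eB_mem hJ1 u huB) hi
        · rw [Function.iterate_succ_apply, hpz] at hk
          exact ih2 i hi ⟨k, hk⟩

include hB hcv hcne hdv hdne hd1 in
lemma BG_iff : ∀ u : Fin n, u ∈ BS G c d → ∀ i : Fin n, i ∉ BS G c d →
    (Descend G i u ↔ Descend G i v) := by
  intro u huB i hi
  have hroot : ∃ r : Fin n, parent G r = v ∧ Descend G r u ∧
      (∀ w : Fin n, Descend G r w → w ∈ BS G c d) := by
    rcases huB with h | h
    · exact ⟨c, hcv, h, fun w hw => Or.inl hw⟩
    · exact ⟨d, hdv, h, fun w hw => Or.inr hw⟩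
  obtain ⟨r, hrv, hru, hrB⟩ := hroot
  obtain ⟨k0, hk0⟩ := hru
  have hvu : Descend G v u := by
    refine ⟨k0 + 1, ?_⟩
    rw [Function.iterate_succ_apply', hk0, hrv]
  constructor
  · rintro ⟨k, hk⟩
    have hklarge : k0 < k := by
      by_contra hc2
      push_neg at hc2
      have : Descend G r ((parent G)^[k] u) := by
        refine ⟨k0 - k, ?_⟩
        rw [← Function.iterate_add_apply]
        have : k0 - k + k = k0 := by omega
        rw [this, hk0]
      rw [hk] at this
      exact hi (hrB i this)
    refine ⟨k - k0 - 1, ?_⟩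
    have hsplit : k = (k - k0 - 1) + (k0 + 1) := by omega
    rw [hsplit, Function.iterate_add_apply] at hk
    rw [show (parent G)^[k0+1] u = v by rw [Function.iterate_succ_apply', hk0, hrv]] at hk
    exact hk
  · intro hiv
    exact descend_trans G hiv hvu

include hB hcv hcne hdv hdne hd1 hJ1 hJ2 hJ3 in
lemma KW : ∀ i : Fin n, i ∉ BS G c d → ∀ u : Fin n,
    (Descend (HG G e) i (e u) ↔ Descend G i u) := by
  intro i hi u
  by_cases huB : u ∈ BS G c d
  · obtain ⟨hv1, hv2⟩ := HV hB hcv hcne hdv hdne hd1 hJ1 hJ2 hJ3 (depth G u) u rfl huB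
    have hvnB : v ∉ BS G c d := v_not_B hB hcv hcne hdv hdne
    have hout := out_descend hB hcv hcne hdv hdne hd1 hJ1 hJ2 v hvnB i
    rw [BG_iff hB hcv hcne hdv hdne hd1 u huB i hi]
    constructor
    · intro h
      exact hout.mp (hv2 i hi h)
    · intro h
      exact descend_trans _ (hout.mpr h) hv1
  · rw [hJ1 u huB]
    exact out_descend hB hcv hcne hdv hdne hd1 hJ1 hJ2 u huB i

include hB hcv hcne hdv hdne hd1 hJ1 hJ2 hJ3 in
lemma weight_eq_low : ∀ i : Fin n, i ∉ BS G c d → weight (HG G e) i = weight G i := by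
  intro i hi
  apply Nat.card_congr
  exact (Equiv.subtypeEquiv e (fun u =>
    (KW hB hcv hcne hdv hdne hd1 hJ1 hJ2 hJ3 i hi u).symm)).symm

include hB in
lemma weight_le_n (K : SimpleGraph (Fin n)) (x : Fin n) : weight K x ≤ n := by
  have h1 : weight K x ≤ Nat.card (Fin n) :=
    Nat.card_le_card_of_injective (fun p : {u : Fin n // Descend K x u} => p.1)
      (fun a b hab => Subtype.ext hab)
  rwa [Nat.card_eq_fintype_card, Fintype.card_fin] at h1

end Weights


theorem stmt2 {n : ℕ} (G : SimpleGraph (Fin n)) (hG : G.Connected) (hB : IsBFSEnum G) :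
    ∃ G' : SimpleGraph (Fin n), Nonempty (G ≃g G') ∧ IsBFSEnum G' ∧
      ∀ v c d : Fin n, ChildOf G' c v → ChildOf G' d v → c ≤ d →
        weight G' d ≤ weight G' c := by
  classical
  set SS : Set (SimpleGraph (Fin n)) := {K | Nonempty (G ≃g K) ∧ IsBFSEnum K} with hSS
  have hGSS : G ∈ SS := ⟨⟨⟨Equiv.refl _, by simp⟩⟩, hB⟩
  obtain ⟨G0, hG0, hmax⟩ := Set.exists_max_image SS
    (fun K => encv n (n + 1) (fun i => weight K i)) (Set.toFinite SS) ⟨G, hGSS⟩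
  obtain ⟨hiso0, hB0⟩ := hG0
  refine ⟨G0, hiso0, hB0, ?_⟩
  intro v c0 d0 hc0 hd0 hle
  by_contra hwc
  push_neg at hwc
  -- every label between c0 and d0 is a child of v
  have hc00 : 0 < c0.val := by
    rcases Nat.eq_zero_or_pos c0.val with h | h
    · exfalso; exact hc0.2 (by rw [← hc0.1, parent_val_zero _ h])
    · exact h
  have hvc : v < c0 := by rw [← hc0.1]; exact hB0.1 c0 hc00
  have hchild : ∀ z : Fin n, c0 ≤ z → z ≤ d0 → ChildOf G0 z v := by
    intro z h1 h2
    have hz0 : 0 < z.val := by rw [Fin.le_def] at h1; omega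
    have hp1 : parent G0 c0 ≤ parent G0 z := hB0.2 c0 z hc00 h1
    have hp2 : parent G0 z ≤ parent G0 d0 := hB0.2 z d0 hz0 h2
    rw [hc0.1] at hp1; rw [hd0.1] at hp2
    refine ⟨le_antisymm hp2 hp1, ?_⟩
    intro h
    rw [h] at h1
    exact absurd h1 (not_le.mpr hvc)
  -- find an adjacent increasing pair
  have hady : ∃ m : Fin n, c0 ≤ m ∧ ∃ hm : m.val + 1 < n,
      (⟨m.val + 1, hm⟩ : Fin n) ≤ d0 ∧ weight G0 m < weight G0 ⟨m.val + 1, hm⟩ := by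
    by_contra hno
    push_neg at hno
    have hmono := chain_mono (α := ℕᵒᵈ) (fun i => OrderDual.toDual (weight G0 i)) c0 d0 hle ?_
    · exact absurd hwc (not_lt.mpr hmono)
    · intro z hz1 hz2 hz3
      have hzd : (⟨z.val + 1, hz3⟩ : Fin n) ≤ d0 := by
        rw [Fin.le_def]; rw [Fin.lt_def] at hz2; simp; omega
      exact hno z hz1 hz3 hzd
  obtain ⟨c, hcc0, hm, hmd0, hw⟩ := hady
  set d : Fin n := ⟨c.val + 1, hm⟩ with hddef
  have hcled : c ≤ d := by rw [Fin.le_def]; simp [hddef]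
  have hcd0 : c ≤ d0 := le_trans hcled hmd0
  obtain ⟨hcv, hcne⟩ := hchild c hcc0 hcd0
  obtain ⟨hdv, hdne⟩ := hchild d (le_trans hcc0 hcled) hmd0
  have hd1 : d.val = c.val + 1 := rfl
  obtain ⟨e, hJ1, hJ2, hJ3, hBFS'⟩ := exists_good hB0 hcv hcne hdv hdne hd1
  have hH : HG G0 e ∈ SS := ⟨⟨(Classical.choice hiso0).trans (HG_iso G0 e)⟩, hBFS'⟩
  have hW2 : weight G0 d ≤ weight (HG G0 e) c :=
    weight_d_le hB0 hcv hcne hdv hdne hd1 hJ1 hJ2 hJ3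
  have hW1 : ∀ j : Fin n, j < c → weight (HG G0 e) j = weight G0 j := by
    intro j hj
    apply weight_eq_low hB0 hcv hcne hdv hdne hd1 hJ1 hJ2 hJ3
    intro hjB
    exact absurd (B_ge_c hB0 hd1 j hjB) (not_le.mpr hj)
  have hENC : encv n (n + 1) (fun i => weight G0 i) <
      encv n (n + 1) (fun i => weight (HG G0 e) i) := by
    apply enc_lt (n + 1) (by omega) _ _
      (fun i => Nat.lt_succ_of_le (weight_le_n hB0 G0 i)) c
    · intro j hj
      exact (hW1 j hj).symm
    · exact lt_of_lt_of_le hw hW2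
  exact absurd (hmax _ hH) (not_le.mpr hENC)
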